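/- For all integers p ≥ 2, the alternating sum ∑_{j=0}^{2p+1} (-1)^j C(2p+1, j) C(2p-2, 2p+1-j) equals (-1)^p C(2p-1, p) (3-2p)/(2p-1). -/

import Mathlib

open Polynomial Finset

lemma coeff_one_sub_pow (m j : ℕ) :
    ((1 - X : ℚ[X]) ^ m).coeff j = (-1) ^ j * (m.choose j : ℚ) := by
  have h1 : (1 - X : ℚ[X]) = (-1) * (X + C (-1)) := by
    simp [C_neg]; ring
  rw [h1, mul_pow, ← C_1, ← C_neg, ← C_pow, coeff_C_mul, coeff_X_add_C_pow]
  rcases le_or_gt j m with h | h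
  · have e : m + (m - j) = 2 * (m - j) + j := by omega
    rw [← mul_assoc, ← pow_add, e, pow_add, pow_mul]
    norm_num
  · rw [Nat.choose_eq_zero_of_lt h]
    norm_num

lemma expandD (m : ℕ) : (1 - X ^ 2 : ℚ[X]) ^ m = ∑ k ∈ range (m + 1),
    C ((-1 : ℚ) ^ k * m.choose k) * X ^ (2 * k) := by
  have h : (1 - X ^ 2 : ℚ[X]) = (-X ^ 2) + 1 := by ring
  rw [h, add_pow]
  refine Finset.sum_congr rfl fun k _ => ?_
  rw [neg_pow, one_pow, ← pow_mul, C_mul, C_pow, C_neg, C_1, C_eq_natCast]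
  ring

lemma coeffD_even (m t : ℕ) :
    ((1 - X ^ 2 : ℚ[X]) ^ m).coeff (2 * t) = (-1) ^ t * (m.choose t : ℚ) := by
  rw [expandD, finset_sum_coeff]
  simp only [coeff_C_mul, coeff_X_pow]
  rcases le_or_gt t m with h | h
  · rw [Finset.sum_eq_single t]
    · simp
    · intro b _ hb
      have : ¬ (2 * t = 2 * b) := by omega
      simp [this]
    · intro h2
      exact absurd (Finset.mem_range.mpr (by omega)) h2
  · rw [Nat.choose_eq_zero_of_lt h]
    rw [Finset.sum_eq_zero]
    · simp
    · intro b hb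
      have hb' := Finset.mem_range.mp hb
      have : ¬ (2 * t = 2 * b) := by omega
      simp [this]

lemma coeffD_odd (m t : ℕ) :
    ((1 - X ^ 2 : ℚ[X]) ^ m).coeff (2 * t + 1) = 0 := by
  rw [expandD, finset_sum_coeff]
  apply Finset.sum_eq_zero
  intro b _
  have h : ¬ (2 * t + 1 = 2 * b) := by omega
  rw [coeff_C_mul, coeff_X_pow, if_neg h, mul_zero]

theorem stmt_2 (p : ℕ) (hp : 2 ≤ p) :
    ∑ j ∈ Finset.range (2 * p + 2),
        (-1 : ℚ) ^ j * ((2 * p + 1).choose j) * ((2 * p - 2).choose (2 * p + 1 - j)) =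
      (-1) ^ p * ((2 * p - 1).choose p) * ((3 : ℚ) - 2 * p) / ((2 : ℚ) * p - 1) := by
  obtain ⟨q, rfl⟩ : ∃ q, p = q + 2 := ⟨p - 2, by omega⟩
  set D : ℚ[X] := (1 - X ^ 2) ^ (2 * q + 2) with hD
  -- rewrite LHS as a coefficient
  have key : ∑ j ∈ Finset.range (2 * (q + 2) + 2),
      (-1 : ℚ) ^ j * ((2 * (q + 2) + 1).choose j) *
        ((2 * (q + 2) - 2).choose (2 * (q + 2) + 1 - j)) =
      (((1 - X : ℚ[X]) ^ (2 * q + 5)) * ((1 + X : ℚ[X]) ^ (2 * q + 2))).coeff (2 * q + 5) := by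
    rw [coeff_mul, Finset.Nat.sum_antidiagonal_eq_sum_range_succ_mk]
    have e1 : 2 * (q + 2) + 2 = (2 * q + 5) + 1 := by omega
    rw [e1]
    refine Finset.sum_congr rfl fun j hj => ?_
    rw [coeff_one_sub_pow, coeff_one_add_X_pow]
    have e2 : 2 * (q + 2) + 1 = 2 * q + 5 := by omega
    have e3 : 2 * (q + 2) - 2 = 2 * q + 2 := by omega
    rw [e2, e3, mul_assoc]
  rw [key]
  -- factor the product
  have fac : ((1 - X : ℚ[X]) ^ (2 * q + 5)) * ((1 + X : ℚ[X]) ^ (2 * q + 2)) =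
      (1 - X) ^ 3 * D := by
    have e : (2 * q + 5) = 3 + (2 * q + 2) := by omega
    rw [hD, e, pow_add, mul_assoc, ← mul_pow]
    ring_nf
  rw [fac]
  -- expand (1-X)^3
  have cube : ((1 - X : ℚ[X]) ^ 3) * D =
      D - C 3 * (X ^ 1 * D) + C 3 * (X ^ 2 * D) - X ^ 3 * D := by
    have h3 : (C (3:ℚ)) = (3 : ℚ[X]) := by
      exact map_ofNat Polynomial.C 3
    rw [h3]; ring
  rw [cube]
  have c1 : ((X : ℚ[X]) ^ 1 * D).coeff (2 * q + 5) = D.coeff (2 * q + 4) := by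
    rw [show 2 * q + 5 = (2 * q + 4) + 1 from by omega, coeff_X_pow_mul]
  have c2 : ((X : ℚ[X]) ^ 2 * D).coeff (2 * q + 5) = D.coeff (2 * q + 3) := by
    rw [show 2 * q + 5 = (2 * q + 3) + 2 from by omega, coeff_X_pow_mul]
  have c3 : ((X : ℚ[X]) ^ 3 * D).coeff (2 * q + 5) = D.coeff (2 * q + 2) := by
    rw [show 2 * q + 5 = (2 * q + 2) + 3 from by omega, coeff_X_pow_mul]
  rw [coeff_sub, coeff_add, coeff_sub, coeff_C_mul, coeff_C_mul, c1, c2, c3]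
  have d0 : D.coeff (2 * q + 5) = 0 := by
    rw [show 2 * q + 5 = 2 * (q + 2) + 1 from by omega]; exact coeffD_odd _ _
  have d1 : D.coeff (2 * q + 4) = (-1) ^ (q + 2) * ((2 * q + 2).choose (q + 2) : ℚ) := by
    rw [show 2 * q + 4 = 2 * (q + 2) from by omega]; exact coeffD_even _ _
  have d2 : D.coeff (2 * q + 3) = 0 := by
    rw [show 2 * q + 3 = 2 * (q + 1) + 1 from by omega]; exact coeffD_odd _ _
  have d3 : D.coeff (2 * q + 2) = (-1) ^ (q + 1) * ((2 * q + 2).choose (q + 1) : ℚ) := by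
    rw [show 2 * q + 2 = 2 * (q + 1) from by omega]; exact coeffD_even _ _
  rw [d0, d1, d2, d3]
  -- binomial identities
  have pascal : ((2 * q + 3).choose (q + 2) : ℚ)
      = (2 * q + 2).choose (q + 1) + (2 * q + 2).choose (q + 2) := by
    rw [show (2 * q + 3) = (2 * q + 2) + 1 from by omega, Nat.choose_succ_succ]
    push_cast; ring
  have succmul : ((2 * q + 3 : ℚ)) * ((2 * q + 2).choose (q + 1) : ℚ)
      = ((2 * q + 3).choose (q + 2) : ℚ) * (q + 2 : ℚ) := by
    have h := Nat.add_one_mul_choose_eq (2 * q + 2) (q + 1)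
    rw [show 2 * q + 2 + 1 = 2 * q + 3 from by omega,
        show q + 1 + 1 = q + 2 from by omega] at h
    have h2 : (((2 * q + 3) * (2 * q + 2).choose (q + 1) : ℕ) : ℚ)
        = (((2 * q + 3).choose (q + 2) * (q + 2) : ℕ) : ℚ) := congrArg (fun n : ℕ => (n : ℚ)) h
    push_cast at h2
    linarith
  rw [show (2 * (q + 2) - 1) = 2 * q + 3 from by omega]
  have hq0 : (0 : ℚ) ≤ (q : ℚ) := Nat.cast_nonneg q
  have hne : ((2 : ℚ) * ((q : ℚ) + 2) - 1) ≠ 0 := by intro h; linarith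
  push_cast
  rw [eq_div_iff hne]
  linear_combination ((-1 : ℚ) ^ q) * (4 * succmul + 3 * (2 * (q : ℚ) + 3) * pascal)
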